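/- If p is a fixed point of a κ-strict pseudo-contraction T and (xₙ) is the Mann iteration with λₙ ∈ (0,1), then for all n: ‖x_{n+1} - p‖² ≤ ‖xₙ - p‖² - (λₙ - κ)(1 - λₙ)‖xₙ - Txₙ‖². -/

import Mathlib

lemma convex_comb_norm_sq {H : Type*} [NormedAddCommGroup H] [InnerProductSpace ℝ H]
    (t : ℝ) (a b : H) :
    ‖t • a + (1 - t) • b‖ ^ 2
      = t * ‖a‖ ^ 2 + (1 - t) * ‖b‖ ^ 2 - t * (1 - t) * ‖a - b‖ ^ 2 := by
  have h1 : ‖t • a + (1 - t) • b‖ ^ 2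
      = (inner ℝ (t • a + (1 - t) • b) (t • a + (1 - t) • b) : ℝ) := by
    rw [real_inner_self_eq_norm_sq]
  have h2 : ‖a - b‖ ^ 2 = (inner ℝ (a - b) (a - b) : ℝ) := by rw [real_inner_self_eq_norm_sq]
  have h3 : ‖a‖ ^ 2 = (inner ℝ a a : ℝ) := by rw [real_inner_self_eq_norm_sq]
  have h4 : ‖b‖ ^ 2 = (inner ℝ b b : ℝ) := by rw [real_inner_self_eq_norm_sq]
  rw [h1, h2, h3, h4]
  simp only [inner_add_add_self, inner_sub_sub_self, real_inner_smul_left,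
    real_inner_smul_right, real_inner_comm a b]
  ring

theorem stmt_3 {H : Type*} [NormedAddCommGroup H] [InnerProductSpace ℝ H]
    (C : Set H) (hCne : C.Nonempty) (hCconv : Convex ℝ C)
    (κ : ℝ) (hκ0 : 0 ≤ κ) (hκ1 : κ < 1)
    (T : H → H) (hTmap : Set.MapsTo T C C)
    (hT : ∀ u ∈ C, ∀ v ∈ C,
      ‖T u - T v‖ ^ 2 ≤ ‖u - v‖ ^ 2 + κ * ‖(u - T u) - (v - T v)‖ ^ 2)
    (p : H) (hp : p ∈ C) (hfix : T p = p)
    (lam : ℕ → ℝ) (hlam : ∀ n, lam n ∈ Set.Ioo (0:ℝ) 1)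
    (x : ℕ → H) (hx0 : x 0 ∈ C)
    (hxrec : ∀ n, x (n + 1) = lam n • x n + (1 - lam n) • T (x n)) :
    ∀ n : ℕ,
      ‖x (n + 1) - p‖ ^ 2
        ≤ ‖x n - p‖ ^ 2 - (lam n - κ) * (1 - lam n) * ‖x n - T (x n)‖ ^ 2 := by
  have hmem : ∀ n, x n ∈ C := by
    intro n
    induction n with
    | zero => exact hx0
    | succ k ih =>
      rw [hxrec k]
      exact hCconv ih (hTmap ih) (le_of_lt (hlam k).1)
        (by linarith [(hlam k).2]) (by ring)
  intro n
  obtain ⟨hl0, hl1⟩ := hlam n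
  have hxin := hmem n
  have hTle : ‖T (x n) - p‖ ^ 2 ≤ ‖x n - p‖ ^ 2 + κ * ‖x n - T (x n)‖ ^ 2 := by
    have := hT (x n) hxin p hp
    rw [hfix] at this
    simpa using this
  have hdiff : x n - p - (T (x n) - p) = x n - T (x n) := by abel
  have hid : ‖x (n + 1) - p‖ ^ 2
      = lam n * ‖x n - p‖ ^ 2 + (1 - lam n) * ‖T (x n) - p‖ ^ 2
        - lam n * (1 - lam n) * ‖x n - T (x n)‖ ^ 2 := by
    have heq : x (n + 1) - p = lam n • (x n - p) + (1 - lam n) • (T (x n) - p) := by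
      rw [hxrec n]; module
    rw [heq, convex_comb_norm_sq, hdiff]
  rw [hid]
  nlinarith [sq_nonneg ‖x n - T (x n)‖]
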